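/- The pushforward–pullback (Beck–Chevalley) identity holds for finitely supported functions on groupoids: given a (homotopy) Cartesian square of finite groupoids with X = Y ×_W Z, maps s' : X → Y, p' : X → Z, p : Y → W, s : Z → W, the equality s^* ∘ p_* = p'_* ∘ s'^* holds as linear maps Fun(π_0 Y, ℂ) → Fun(π_0 Z, ℂ), where the pushforward is (f_* φ)(b) = Σ_{x ∈ π_0(Rf^{-1}(b))} φ(x)/|Aut(x)| over the homotopy fiber. -/

import Mathlib

open CategoryTheory

/-- The weight of an object of a groupoid: `1/(#{y ≅ x} · |Aut x|)`; summing the weights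
over an isomorphism class gives `1/|Aut|`, so that for an iso-invariant function `φ`,
`Σ_{x ∈ Obj} φ(x)·weight(x) = Σ_{[x] ∈ π₀} φ([x])/|Aut(x)|`. -/
noncomputable def gweight {G : Type*} [Category G] (x : G) : ℂ :=
  1 / ((Nat.card {y : G // Nonempty (x ≅ y)} : ℂ) * (Nat.card (x ≅ x) : ℂ))

/-- The pushforward of a function along a functor `F : A ⥤ B`:
`(F_* φ)(b) = Σ_{x ∈ π₀(F^{-1}(b))} φ(x)/|Aut(x)|`, the sum over the homotopy fiber
`F^{-1}(b) = Comma F (fromPUnit b)`, written as a weighted sum over its objects. -/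
noncomputable def push {A B : Type*} [Category A] [Category B] (F : A ⥤ B)
    (φ : A → ℂ) (b : B) : ℂ :=
  ∑ᶠ x : Comma F (Functor.fromPUnit.{0} b), φ x.left * gweight x

section Aux
variable {C : Type*} [Category C]

instance isoFinite [Finite C] [∀ a b : C, Finite (a ⟶ b)] (x y : C) : Finite (x ≅ y) :=
  Finite.of_injective (fun i => i.hom) fun _ _ h => Iso.ext h

lemma gweight_eq_of_iso {x y : C} (e : x ≅ y) : gweight x = gweight y := by
  have h1 : Nat.card {w : C // Nonempty (x ≅ w)} = Nat.card {w : C // Nonempty (y ≅ w)} :=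
    Nat.card_congr (Equiv.subtypeEquivRight fun w =>
      ⟨fun ⟨i⟩ => ⟨e.symm ≪≫ i⟩, fun ⟨i⟩ => ⟨e ≪≫ i⟩⟩)
  have h2 : Nat.card (x ≅ x) = Nat.card (y ≅ y) := Nat.card_congr (Iso.isoCongr e e)
  simp [gweight, h1, h2]

variable [Finite C] [∀ a b : C, Finite (a ⟶ b)]

lemma class_sum (χ : C → ℂ) (hχ : ∀ a b : C, (a ≅ b) → χ a = χ b) :
    (∑ᶠ x : C, χ x * gweight x) =
      ∑ᶠ c : Quotient (isIsomorphicSetoid C),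
        χ c.out * (1 / (Nat.card (c.out ≅ c.out) : ℂ)) := by
  classical
  letI : Fintype C := Fintype.ofFinite C
  letI : Fintype (Quotient (isIsomorphicSetoid C)) := Fintype.ofFinite _
  rw [finsum_eq_sum_of_fintype, finsum_eq_sum_of_fintype,
    ← Fintype.sum_fiberwise (fun x : C => (Quotient.mk (isIsomorphicSetoid C) x)) (fun x => χ x * gweight x)]
  refine Finset.sum_congr rfl fun c _ => ?_
  -- each element of the fiber is isomorphic to c.out
  have key : ∀ x : {x : C // Quotient.mk (isIsomorphicSetoid C) x = c}, Nonempty (c.out ≅ x.1) := by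
    rintro ⟨x, hx⟩
    have : (Quotient.mk (isIsomorphicSetoid C) x) = Quotient.mk (isIsomorphicSetoid C) c.out := by
      rw [hx, Quotient.out_eq]
    obtain ⟨i⟩ := Quotient.exact this
    exact ⟨i.symm⟩
  have hconst : ∀ x : {x : C // Quotient.mk (isIsomorphicSetoid C) x = c},
      χ x.1 * gweight x.1 = χ c.out * gweight c.out := by
    intro x
    obtain ⟨i⟩ := key x
    rw [hχ _ _ i.symm, gweight_eq_of_iso i.symm]
  rw [Finset.sum_congr rfl (fun x _ => hconst x), Finset.sum_const, nsmul_eq_mul]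
  have hcard : (Finset.univ (α := {x : C // Quotient.mk (isIsomorphicSetoid C) x = c})).card
      = Nat.card {y : C // Nonempty (c.out ≅ y)} := by
    rw [Finset.card_univ, ← Nat.card_eq_fintype_card]
    refine Nat.card_congr (Equiv.subtypeEquivRight fun x => ⟨fun h => key ⟨x, h⟩, ?_⟩)
    rintro ⟨i⟩
    rw [← Quotient.out_eq c]
    exact Quotient.sound ⟨i.symm⟩
  rw [hcard]
  have hN : (Nat.card {y : C // Nonempty (c.out ≅ y)} : ℂ) ≠ 0 := by
    have : Nonempty {y : C // Nonempty (c.out ≅ y)} := ⟨⟨c.out, ⟨Iso.refl _⟩⟩⟩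
    exact_mod_cast Nat.card_ne_zero.2 ⟨this, inferInstance⟩
  have hA : (Nat.card (c.out ≅ c.out) : ℂ) ≠ 0 := by
    have : Nonempty (c.out ≅ c.out) := ⟨Iso.refl _⟩
    exact_mod_cast Nat.card_ne_zero.2 ⟨this, inferInstance⟩
  unfold gweight
  simp only [Nat.card_eq_fintype_card] at hN hA ⊢
  field_simp

lemma gsum_eq_of_equivalence {D : Type*} [Category D] [Finite D] [∀ a b : D, Finite (a ⟶ b)]
    (E : C ≌ D) (χ : D → ℂ) (hχ : ∀ a b : D, (a ≅ b) → χ a = χ b) :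
    (∑ᶠ x : C, χ (E.functor.obj x) * gweight x) = ∑ᶠ y : D, χ y * gweight y := by
  classical
  letI : Fintype (Quotient (isIsomorphicSetoid C)) := Fintype.ofFinite _
  letI : Fintype (Quotient (isIsomorphicSetoid D)) := Fintype.ofFinite _
  have hχC : ∀ a b : C, (a ≅ b) → χ (E.functor.obj a) = χ (E.functor.obj b) :=
    fun a b i => hχ _ _ (E.functor.mapIso i)
  rw [class_sum _ hχC, class_sum _ hχ, finsum_eq_sum_of_fintype, finsum_eq_sum_of_fintype]
  -- the equivalence of isomorphism classes
  have hrel : ∀ a b : C, (isIsomorphicSetoid C).r a b →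
      (isIsomorphicSetoid D).r (E.functor.obj a) (E.functor.obj b) :=
    fun a b ⟨i⟩ => ⟨E.functor.mapIso i⟩
  have hrel' : ∀ a b : D, (isIsomorphicSetoid D).r a b →
      (isIsomorphicSetoid C).r (E.inverse.obj a) (E.inverse.obj b) :=
    fun a b ⟨i⟩ => ⟨E.inverse.mapIso i⟩
  let q : Quotient (isIsomorphicSetoid C) ≃ Quotient (isIsomorphicSetoid D) :=
    { toFun := Quotient.map E.functor.obj hrel
      invFun := Quotient.map E.inverse.obj hrel'
      left_inv := by
        rintro ⟨x⟩
        exact Quotient.sound ⟨(E.unitIso.app x).symm⟩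
      right_inv := by
        rintro ⟨y⟩
        exact Quotient.sound ⟨E.counitIso.app y⟩ }
  refine Fintype.sum_equiv q _ _ fun c => ?_
  have hq : q c = Quotient.mk (isIsomorphicSetoid D) (E.functor.obj c.out) := by
    conv_lhs => rw [← Quotient.out_eq c]
    rfl
  obtain ⟨e⟩ : Nonempty ((q c).out ≅ E.functor.obj c.out) := by
    have := Quotient.mk_out (s := isIsomorphicSetoid D) (E.functor.obj c.out)
    rw [← hq] at this
    exact this
  have hcard : Nat.card (c.out ≅ c.out) = Nat.card ((q c).out ≅ (q c).out) := by
    rw [Nat.card_congr E.fullyFaithfulFunctor.isoEquiv,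
      Nat.card_congr (Iso.isoCongr e.symm e.symm)]
  rw [hχ _ _ e.symm, hcard]

end Aux

section CommaFinite
variable {A B T : Type*} [Category A] [Category B] [Category T]
  (L : A ⥤ T) (R : B ⥤ T)

instance commaFinite [Finite A] [Finite B] [∀ a b : T, Finite (a ⟶ b)] : Finite (Comma L R) :=
  Finite.of_equiv (Σ p : A × B, (L.obj p.1 ⟶ R.obj p.2))
    { toFun := fun x => ⟨x.1.1, x.1.2, x.2⟩
      invFun := fun o => ⟨(o.left, o.right), o.hom⟩
      left_inv := fun ⟨⟨_, _⟩, _⟩ => rfl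
      right_inv := fun ⟨_, _, _⟩ => rfl }

instance commaHomFinite [∀ a b : A, Finite (a ⟶ b)] [∀ a b : B, Finite (a ⟶ b)]
    (x y : Comma L R) : Finite (x ⟶ y) :=
  Finite.of_injective (fun m => (m.left, m.right)) fun m m' h => by
    have h1 := congrArg Prod.fst h
    have h2 := congrArg Prod.snd h
    exact CommaMorphism.ext h1 h2

end CommaFinite

section Fiber
variable {Y Z W : Type*} [Groupoid Y] [Groupoid Z] [Groupoid W]
  (p : Y ⥤ W) (s : Z ⥤ W) (z : Z)

@[simps] def fiberFun : Comma (Comma.snd p s) (Functor.fromPUnit.{0} z) ⥤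
    Comma p (Functor.fromPUnit.{0} (s.obj z)) where
  obj o := ⟨o.left.left, o.right, o.left.hom ≫ s.map o.hom⟩
  map {o o'} m :=
    { left := m.left.left
      right := m.right
      w := by
        have h1 := m.left.w
        have h2 : m.left.right ≫ o'.hom = o.hom := by simpa using m.w
        dsimp
        rw [← h2, Functor.map_comp, reassoc_of% h1]
        simp }
  map_id o := by aesop_cat
  map_comp f g := by aesop_cat

instance fiberFun_faithful : (fiberFun p s z).Faithful where
  map_injective {o o'} m m' h := by
    have hL := congrArg CommaMorphism.left h
    have h2 : m.left.right ≫ o'.hom = o.hom := by simpa using m.w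
    have h2' : m'.left.right ≫ o'.hom = o.hom := by simpa using m'.w
    have hR : m.left.right = m'.left.right := by
      have := h2.trans h2'.symm
      exact (cancel_mono o'.hom).1 this
    exact CommaMorphism.ext (CommaMorphism.ext hL hR) (Subsingleton.elim _ _)

instance fiberFun_full : (fiberFun p s z).Full where
  map_surjective {o o'} n := by
    refine ⟨⟨⟨n.left, o.hom ≫ Groupoid.inv o'.hom, ?_⟩, n.right, ?_⟩, rfl⟩
    · have h1 := n.w
      dsimp at h1 ⊢
      rw [← cancel_mono (s.map o'.hom)]
      simp only [Functor.map_comp, Category.assoc, Functor.map_inv]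
      simp only [Groupoid.inv_eq_inv, Functor.map_inv, IsIso.inv_hom_id,
        IsIso.inv_hom_id_assoc, Category.comp_id]
      exact h1.trans (Category.comp_id _)
    · show (o.hom ≫ Groupoid.inv o'.hom) ≫ o'.hom = o.hom ≫ _
      simp [Groupoid.inv_eq_inv]

instance fiberFun_essSurj : (fiberFun p s z).EssSurj where
  mem_essImage x :=
    ⟨⟨⟨x.left, z, x.hom⟩, x.right, 𝟙 z⟩, ⟨Comma.isoMk (Iso.refl _) (Iso.refl _) (by change p.map (𝟙 x.left) ≫ x.hom = (x.hom ≫ s.map (𝟙 z)) ≫ 𝟙 _; simp)⟩⟩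

instance fiberFun_isEquiv : (fiberFun p s z).IsEquivalence := {}

end Fiber

/-- Beck–Chevalley for groupoids: for the homotopy Cartesian square with
`X = Y ×_W Z = Comma p s` (objects are triples `(y, z, α : p(y) ⟶ s(z))`, with `α`
invertible since `W` is a groupoid), projections `s' : X → Y`, `p' : X → Z`, and any
iso-invariant function `φ` on (π₀ of) `Y`, one has `s^*(p_* φ) = p'_*(s'^* φ)` as
functions on (π₀ of) `Z`. -/
theorem beck_chevalley {Y Z W : Type*} [Groupoid Y] [Groupoid Z] [Groupoid W]
    [Finite Y] [Finite Z] [Finite W]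
    [∀ a b : Y, Finite (a ⟶ b)] [∀ a b : Z, Finite (a ⟶ b)] [∀ a b : W, Finite (a ⟶ b)]
    (p : Y ⥤ W) (s : Z ⥤ W)
    (φ : Y → ℂ) (hφ : ∀ y y' : Y, (y ≅ y') → φ y = φ y') (z : Z) :
    push p φ (s.obj z) = push (Comma.snd p s) (fun x => φ ((Comma.fst p s).obj x)) z := by
  have key := gsum_eq_of_equivalence
    (C := Comma (Comma.snd p s) (Functor.fromPUnit.{0} z))
    (fiberFun p s z).asEquivalence (fun x => φ x.left)
    (fun a b i => hφ _ _ ((Groupoid.isoEquivHom _ _).symm i.hom.left))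
  unfold push
  rw [← key]
  rfl
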